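/- arXiv:1303.0377 — 11 statements merged into one kernel-verified Lean document; each statement's English description precedes it below -/
import Mathlib

section
/- For all real α > 1, setting q = 2 - 1/α and β = c = q^α·2^(α-1), we have q^α - β·α·q + β·(α-1) ≤ 0. -/
open Real

theorem stmt2 (α q β c : ℝ) (hα : 1 < α)
    (hq : q = 2 - 1/α) (hβ : β = q ^ α * 2 ^ (α - 1)) (hc : c = q ^ α * 2 ^ (α - 1)) :
    q ^ α - β * α * q + β * (α - 1) ≤ 0 := by
  have hα0 : (0:ℝ) < α := by linarith
  have hq1 : 1 < q := by
    rw [hq]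
    have : 1/α < 1 := by rw [div_lt_one hα0]; linarith
    linarith
  have hq0 : 0 < q := by linarith
  have hqpow : 0 < q ^ α := Real.rpow_pos_of_pos hq0 α
  have h2 : 1 < (2:ℝ) ^ (α - 1) := by
    rw [Real.one_lt_rpow_iff_of_pos (by norm_num)]
    exact Or.inl ⟨by norm_num, by linarith⟩
  have key : β * α * q - β * (α - 1) = β * α := by
    rw [hq]; field_simp; ring
  have hβpos : 0 < β := by rw [hβ]; positivity
  nlinarith [mul_pos hβpos hα0, hqpow, h2]
end

section
/- For all real α > 1 and c = (2-1/α)^α·2^(α-1), and all real x ≥ 0: c·x^α + (c-1)·α - c·x ≥ 0. -/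
open Real

theorem stmt3 (α c : ℝ) (hα : 1 < α) (hc : c = (2 - 1/α) ^ α * 2 ^ (α - 1)) :
    ∀ x : ℝ, 0 ≤ x → 0 ≤ c * x ^ α + (c - 1) * α - c * x := by
  intro x hx
  have hα0 : (0:ℝ) < α := by linarith
  -- c ≥ α
  have h2m : (0:ℝ) ≤ 2 - 1/α := by
    have : 1/α ≤ 1 := by rw [div_le_one (by linarith)]; linarith
    linarith
  have h1 : α ≤ (2 - 1/α) ^ α := by
    have hs : (-1:ℝ) ≤ 1 - 1/α := by
      have : 1/α ≤ 1 := by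
        rw [div_le_one hα0]; linarith
      linarith
    have := one_add_mul_self_le_rpow_one_add hs hα.le
    have heq : (1 : ℝ) + (1 - 1/α) = 2 - 1/α := by ring
    calc α = 1 + α * (1 - 1/α) := by field_simp; ring
    _ ≤ (1 + (1 - 1/α)) ^ α := this
    _ = (2 - 1/α) ^ α := by rw [heq]
  have h2 : (1:ℝ) ≤ 2 ^ (α - 1) := by
    apply Real.one_le_rpow (by norm_num) (by linarith)
  have hcα : α ≤ c := by
    rw [hc]
    calc α = α * 1 := by ring
    _ ≤ (2 - 1/α) ^ α * 2 ^ (α - 1) := by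
        apply mul_le_mul h1 h2 (by norm_num) (Real.rpow_nonneg h2m α)
  -- Young's inequality: x ≤ x^α/α + (1 - 1/α)
  have hconj : α.HolderConjugate (α / (α - 1)) := Real.HolderConjugate.conjExponent hα
  have hy : x * 1 ≤ x ^ α / α + 1 ^ (α/(α-1)) / (α/(α-1)) :=
    Real.young_inequality_of_nonneg hx (by norm_num) hconj
  rw [Real.one_rpow] at hy
  have hy' : x ≤ x ^ α / α + (α - 1)/α := by
    have : (1:ℝ) / (α/(α-1)) = (α-1)/α := by
      field_simp
    linarith [hy, this ▸ hy]
  have hA : 0 ≤ x ^ α := Real.rpow_nonneg hx α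
  set A := x ^ α with hAdef
  have hc0 : 0 < c := lt_of_lt_of_le hα0 hcα
  -- c*x ≤ c*A/α + c*(α-1)/α
  have h3 : c * x ≤ c * (A / α + (α-1)/α) := by
    apply mul_le_mul_of_nonneg_left hy' hc0.le
  have key : 0 ≤ c * A + (c - 1) * α - c * (A / α + (α-1)/α) := by
    have e1 : c * A + (c - 1) * α - c * (A / α + (α-1)/α)
        = c * A * ((α - 1)/α) + (c * (α - 1 + 1/α) - α) := by
      field_simp; ring
    rw [e1]
    have t1 : 0 ≤ c * A * ((α - 1)/α) := by
      exact mul_nonneg (mul_nonneg hc0.le hA) (div_nonneg (by linarith) hα0.le)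
    have t2 : 0 ≤ c * (α - 1 + 1/α) - α := by
      have hpos : 0 ≤ α - 1 + 1/α := by
        have h0 : 0 ≤ (α - 1)^2 / α := div_nonneg (sq_nonneg _) hα0.le
        have e : (α-1)^2/α = α - 2 + 1/α := by field_simp; ring
        nlinarith [h0]
      have hmul : α * (α - 1 + 1/α) ≤ c * (α - 1 + 1/α) :=
        mul_le_mul_of_nonneg_right hcα hpos
      have hinv : α * (1/α) = 1 := by field_simp
      nlinarith [hmul, sq_nonneg (α - 1), hinv]
    linarith
  linarith
end

section
/- For all real α > 1, with q = 2 - 1/α, β = c = q^α·2^(α-1), and for all real x with 0 ≤ x ≤ 1 and y with 0 ≤ y ≤ 1: q^α·y^α·(1+x)^α - β·q·(1+x)·y + β·x·y ≤ c·x^α·y^α + (c-1)·(α-1). -/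
open Real

-- power mean: (a+b)^p ≤ 2^(p-1) (a^p + b^p) for reals a,b ≥ 0, 1 ≤ p
lemma real_pm {a b p : ℝ} (ha : 0 ≤ a) (hb : 0 ≤ b) (hp : 1 ≤ p) :
    (a + b) ^ p ≤ 2 ^ (p - 1) * (a ^ p + b ^ p) := by
  have h := NNReal.rpow_add_le_mul_rpow_add_rpow ⟨a, ha⟩ ⟨b, hb⟩ hp
  have := NNReal.coe_le_coe.2 h
  push_cast [NNReal.coe_rpow] at this
  convert this using 3
  all_goals rfl

theorem stmt5 (α q β c : ℝ) (hα : 1 < α)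
    (hq : q = 2 - 1/α) (hβ : β = q ^ α * 2 ^ (α - 1)) (hc : c = q ^ α * 2 ^ (α - 1)) :
    ∀ x y : ℝ, 0 ≤ x → x ≤ 1 → 0 ≤ y → y ≤ 1 →
      q ^ α * y ^ α * (1 + x) ^ α - β * q * (1 + x) * y + β * x * y ≤
        c * x ^ α * y ^ α + (c - 1) * (α - 1) := by
  intro x y hx0 hx1 hy0 hy1
  have hα0 : (0:ℝ) < α := by linarith
  have hq1 : 1 ≤ q := by
    rw [hq]
    have : 1/α ≤ 1 := by rw [div_le_one hα0]; linarith
    linarith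
  have hq0 : 0 ≤ q := by linarith
  have hQ1 : 1 ≤ q ^ α := Real.one_le_rpow hq1 (le_of_lt hα0)
  have hT1 : (1:ℝ) ≤ 2 ^ (α - 1) := Real.one_le_rpow (by norm_num) (by linarith)
  have hc1 : 1 ≤ c := by rw [hc]; nlinarith
  have h1x : (0:ℝ) ≤ 1 + x := by linarith
  -- fact 1: (1+x)^α ≤ 2^(α-1) * (1 + x^α)
  have f1 : (1 + x) ^ α ≤ 2 ^ (α - 1) * (1 + x ^ α) := by
    have h := real_pm (by norm_num : (0:ℝ) ≤ 1) hx0 (le_of_lt hα)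
    simpa [Real.one_rpow] using h
  -- fact 2: 2^(α-1) * x^α ≤ (1+x)^α
  have f2 : 2 ^ (α - 1) * x ^ α ≤ (1 + x) ^ α := by
    have he : ((2:ℝ) ^ ((α - 1)/α)) ^ α = 2 ^ (α - 1) := by
      rw [← Real.rpow_mul (by norm_num : (0:ℝ) ≤ 2)]
      congr 1
      field_simp
    have hb : (2:ℝ) ^ ((α - 1)/α) ≤ 2 := by
      nth_rewrite 2 [← Real.rpow_one 2]
      apply Real.rpow_le_rpow_of_exponent_le (by norm_num)
      rw [div_le_one hα0]; linarith
    have hbx : (2:ℝ) ^ ((α - 1)/α) * x ≤ 1 + x := by nlinarith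
    calc 2 ^ (α - 1) * x ^ α = ((2:ℝ) ^ ((α - 1)/α)) ^ α * x ^ α := by rw [he]
      _ = ((2:ℝ) ^ ((α - 1)/α) * x) ^ α := (Real.mul_rpow (by positivity) hx0).symm
      _ ≤ (1 + x) ^ α := Real.rpow_le_rpow (by positivity) hbx (le_of_lt hα0)
  -- fact 3: y^α ≤ y
  have f3 : y ^ α ≤ y := by
    rcases eq_or_lt_of_le hy0 with h | h
    · rw [← h, Real.zero_rpow (by positivity)]
    · calc y ^ α ≤ y ^ (1:ℝ) := Real.rpow_le_rpow_of_exponent_ge h hy1 (by linarith)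
        _ = y := Real.rpow_one y
  have hP0 : 0 ≤ (1 + x) ^ α := Real.rpow_nonneg h1x α
  have hX0 : 0 ≤ x ^ α := Real.rpow_nonneg hx0 α
  have hY0 : 0 ≤ y ^ α := Real.rpow_nonneg hy0 α
  have hQ0 : (0:ℝ) ≤ q ^ α := by linarith
  have hT0 : (0:ℝ) ≤ 2 ^ (α - 1) := by linarith
  have h1 : 0 ≤ q ^ α * ((1 + x) ^ α - 2 ^ (α - 1) * x ^ α) * (y - y ^ α) :=
    mul_nonneg (mul_nonneg hQ0 (by linarith)) (by linarith)
  have h2 : 0 ≤ q ^ α * y * (2 ^ (α - 1) * (1 + x ^ α) - (1 + x) ^ α) :=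
    mul_nonneg (mul_nonneg hQ0 hy0) (by linarith)
  have h3 : 0 ≤ q ^ α * 2 ^ (α - 1) * (y * (1 + x)) * (q - 1) :=
    mul_nonneg (mul_nonneg (mul_nonneg hQ0 hT0) (mul_nonneg hy0 h1x)) (by linarith)
  have h4 : 0 ≤ (c - 1) * (α - 1) := mul_nonneg (by linarith) (by linarith)
  rw [hβ, hc] at *
  nlinarith [h1, h2, h3, h4]
end

section
/- For all real α > 1, q = 2 - 1/α, β = c = q^α·2^(α-1), and 0 ≤ y ≤ 1: q^α·y^α·2^(α-1) - β·q·y - (c-1)·(α-1) ≤ 0. -/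
open Real

theorem stmt6 (α q β c : ℝ) (hα : 1 < α)
    (hq : q = 2 - 1/α) (hβ : β = q ^ α * 2 ^ (α - 1)) (hc : c = q ^ α * 2 ^ (α - 1)) :
    ∀ y : ℝ, 0 ≤ y → y ≤ 1 →
      q ^ α * y ^ α * 2 ^ (α - 1) - β * q * y - (c - 1) * (α - 1) ≤ 0 := by
  intro y hy0 hy1
  have hα0 : (0:ℝ) < α := by linarith
  have hq1 : 1 < q := by
    rw [hq]
    have : 1/α < 1 := by
      rw [div_lt_one hα0]; linarith
    linarith
  have hqα : 1 ≤ q ^ α := Real.one_le_rpow hq1.le hα0.le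
  have h2 : (1:ℝ) ≤ 2 ^ (α - 1) := Real.one_le_rpow (by norm_num) (by linarith)
  have hc1 : 1 ≤ c := by
    rw [hc]
    nlinarith
  have hyα : y ^ α ≤ y := by
    rcases eq_or_lt_of_le hy0 with h | h
    · rw [← h, Real.zero_rpow (by linarith)]
    · calc y ^ α ≤ y ^ (1:ℝ) := Real.rpow_le_rpow_of_exponent_ge h hy1 (by linarith)
        _ = y := Real.rpow_one y
  have hc0 : (0:ℝ) < c := by linarith
  have key : c * y ^ α - c * q * y ≤ 0 := by
    have h1 : c * y ^ α ≤ c * y := by nlinarith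
    nlinarith [mul_nonneg (mul_nonneg hc0.le hy0) (sub_nonneg.2 hq1.le)]
  have : q ^ α * y ^ α * 2 ^ (α - 1) = c * y ^ α := by rw [hc]; ring
  rw [this, hβ, ← hc]
  nlinarith
end

section
/- For all real α > 1, q = 2 - 1/α, and β = q^α·2^(α-1): q^α·(1 - α·2^(α-1)) + α - 1 ≤ 0. -/
open Real

theorem stmt8 (α q β : ℝ) (hα : 1 < α)
    (hq : q = 2 - 1/α) (hβ : β = q ^ α * 2 ^ (α - 1)) :
    q ^ α * (1 - α * 2 ^ (α - 1)) + α - 1 ≤ 0 := by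
  have hα0 : (0:ℝ) < α := by linarith
  have hq1 : (1:ℝ) ≤ q := by
    rw [hq]
    have : 1/α ≤ 1 := by
      rw [div_le_one hα0]; linarith
    linarith
  have hqa : (1:ℝ) ≤ q ^ α := one_le_rpow hq1 hα0.le
  have h2 : (1:ℝ) ≤ (2:ℝ) ^ (α - 1) := by
    apply one_le_rpow (by norm_num) (by linarith)
  have hA : α ≤ α * 2 ^ (α - 1) := by nlinarith
  have hneg : 1 - α * 2 ^ (α - 1) ≤ 0 := by linarith
  nlinarith [mul_le_mul_of_nonpos_right hqa hneg]
end

section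
/- For all real α > 1, q = 2 - 1/α, β = q^α·2^(α-1), and all real x ≥ 1: q^α·(1+x)^α - β·α·q·(1+x)·x^(α-1) + β·(α-1)·x^α + α - 1 ≤ 0. -/
set_option maxHeartbeats 1000000


open Real

theorem stmt9 (α q β : ℝ) (hα : 1 < α)
    (hq : q = 2 - 1/α) (hβ : β = q ^ α * 2 ^ (α - 1)) :
    ∀ x : ℝ, 1 ≤ x →
      q ^ α * (1 + x) ^ α - β * α * q * (1 + x) * x ^ (α - 1) + β * (α - 1) * x ^ α
        + α - 1 ≤ 0 := by
  intro x hx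
  have hα0 : (0:ℝ) < α := by linarith
  have hq1 : (1:ℝ) < q := by
    have : 1/α < 1 := by rw [div_lt_one hα0]; exact hα
    rw [hq]; linarith
  have hx0 : (0:ℝ) < x := by linarith
  have hu0 : (0:ℝ) < 1 + x := by linarith
  have h1 : α * q = 2*α - 1 := by
    rw [hq]; field_simp
  -- abbreviations
  set u : ℝ := 1 + x with hu
  set P : ℝ := q ^ α with hP
  set T : ℝ := (2:ℝ) ^ (α - 1) with hT
  set X : ℝ := x ^ α with hX
  set Y : ℝ := x ^ (α - 1) with hY
  clear_value P T X Y
  have hPge : (1:ℝ) ≤ P := by rw [hP]; exact Real.one_le_rpow hq1.le hα0.le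
  have hTge : (1:ℝ) ≤ T := by rw [hT]; exact Real.one_le_rpow (by norm_num) (by linarith)
  have hXge : (1:ℝ) ≤ X := by rw [hX]; exact Real.one_le_rpow hx (by linarith)
  have hYge : (1:ℝ) ≤ Y := by rw [hY]; exact Real.one_le_rpow hx (by linarith)
  have hxY : x * Y = X := by
    rw [hY, hX, ← Real.rpow_one_add' hx0.le (by intro h; linarith)]
    ring_nf
  -- Bernoulli: u ^ α ≤ x ^ α + α * u ^ (α - 1)
  have hber : 1 + α * (x/u - 1) ≤ (1 + (x/u - 1)) ^ α :=
    one_add_mul_self_le_rpow_one_add (by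
      have : 0 ≤ x / u := (div_pos hx0 hu0).le
      linarith) hα.le
  have hxeq : (1 + (x/u - 1)) = x/u := by ring
  rw [hxeq] at hber
  have hdiv : (x/u) ^ α = X / u ^ α := by
    rw [hX]; exact Real.div_rpow hx0.le hu0.le α
  have hup : (0:ℝ) < u ^ α := Real.rpow_pos_of_pos hu0 α
  have husub : u ^ (α - 1) = u ^ α / u := Real.rpow_sub_one hu0.ne' α
  have key1 : u ^ α ≤ X + α * u ^ (α - 1) := by
    have h2 : u ^ α * (1 + α * (x/u - 1)) ≤ u ^ α * ((x/u) ^ α) := by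
      exact mul_le_mul_of_nonneg_left hber hup.le
    rw [hdiv] at h2
    have h3 : u ^ α * (X / u ^ α) = X := by field_simp
    rw [h3] at h2
    have h4 : u ^ α * (1 + α * (x/u - 1)) = u ^ α - α * (u ^ α / u) := by
      field_simp; ring
    rw [h4, ← husub] at h2
    linarith
  -- u^(α-1) ≤ T * Y
  have key2 : u ^ (α - 1) ≤ T * Y := by
    have h5 : u ^ (α - 1) ≤ (2*x) ^ (α - 1) :=
      Real.rpow_le_rpow hu0.le (by rw [hu]; linarith) (by linarith)
    have h6 : ((2:ℝ)*x) ^ (α - 1) = T * Y := by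
      rw [hT, hY]; exact Real.mul_rpow (by norm_num) hx0.le
    linarith [h6 ▸ h5]
  -- combine: u^α ≤ X + α * (T*Y)
  have key3 : u ^ α ≤ X + α * (T * Y) := by nlinarith [key1, key2, hα0]
  -- main estimate
  have hPpos : (0:ℝ) < P := by linarith
  have step1 : P * u ^ α - β * α * q * u * Y + β * (α-1) * X + α - 1
      ≤ P * (X + α * (T*Y)) - β * α * q * u * Y + β * (α-1) * X + α - 1 := by
    have := mul_le_mul_of_nonneg_left key3 hPpos.le
    linarith
  -- final polynomial inequality
  have e1 : 0 ≤ (X*P - 1) * (T*α - 1) := mul_nonneg (by nlinarith) (by nlinarith)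
  have e2 : 0 ≤ P*T*α*Y*(q-1) := by
    have : (0:ℝ) ≤ q - 1 := by linarith
    have h7 : (0:ℝ) ≤ P*T*α*Y := by positivity
    exact mul_nonneg h7 this
  have e3 : α*(1-T) ≤ 0 := by nlinarith
  have keyid : P * (X + α * (T*Y)) - β * α * q * u * Y + β * (α-1) * X + α - 1
      = -((X*P - 1) * (T*α - 1)) - P*T*α*Y*(q-1) + α*(1-T) := by
    rw [hβ, hu]
    linear_combination (-(P*T*α*q)) * hxY + (-(P*T*X)) * h1
  have final : P * u ^ α - β * α * q * u * Y + β * (α-1) * X + α - 1 ≤ 0 := by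
    rw [keyid] at step1
    linarith
  exact final
end

section
/- For all real α > 1, q = 2 - 1/α, and β = q^α·2^(α-1): α ≤ β. -/
open Real

theorem stmt11 (α q β : ℝ) (hα : 1 < α)
    (hq : q = 2 - 1/α) (hβ : β = q ^ α * 2 ^ (α - 1)) :
    α ≤ β := by
  have hα0 : (0:ℝ) < α := lt_trans one_pos hα
  have hs : (0:ℝ) ≤ 1 - 1/α := by
    have : 1/α < 1 := by
      rw [div_lt_one hα0]; exact hα
    linarith
  have hbern : 1 + α * (1 - 1/α) ≤ (1 + (1 - 1/α)) ^ α :=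
    one_add_mul_self_le_rpow_one_add (by linarith) hα.le
  have hq' : q = 1 + (1 - 1/α) := by rw [hq]; ring
  have hqa : α ≤ q ^ α := by
    rw [hq']
    have : 1 + α * (1 - 1/α) = α := by field_simp; ring
    linarith
  have h2 : (1:ℝ) ≤ (2:ℝ) ^ (α - 1) :=
    Real.one_le_rpow one_le_two (by linarith)
  calc α = α * 1 := by ring
    _ ≤ q ^ α * 2 ^ (α - 1) :=
        mul_le_mul hqa h2 one_pos.le (le_trans hα0.le hqa)
    _ = β := hβ.symm
end

section
/- For all real α > 1, q = 2 - 1/α, and β = q^α·2^(α-1): q^α - β·q + α - 1 ≤ 0. -/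
open Real

theorem stmt12 (α q β : ℝ) (hα : 1 < α)
    (hq : q = 2 - 1/α) (hβ : β = q ^ α * 2 ^ (α - 1)) :
    q ^ α - β * q + α - 1 ≤ 0 := by
  have hα0 : (0:ℝ) < α := by linarith
  have hq1 : 1 ≤ q := by
    rw [hq]
    have : 1/α < 1 := by
      rw [div_lt_one hα0]; exact hα
    linarith
  have hq0 : 0 < q := by linarith
  -- 2^(α-1) ≥ 1 + log 2 * (α-1)
  have h2 : (2:ℝ) ^ (α - 1) = exp (log 2 * (α - 1)) := by
    rw [rpow_def_of_pos (by norm_num : (0:ℝ) < 2)]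
  have hexp : 1 + log 2 * (α - 1) ≤ (2:ℝ) ^ (α - 1) := by
    rw [h2]
    have := add_one_le_exp (log 2 * (α - 1)); linarith
  have hlog : (0.6931471803 : ℝ) < log 2 := log_two_gt_d9
  -- key: 2^(α-1) * (2α - 1) ≥ α^2
  have hkey : α ^ 2 ≤ (2:ℝ) ^ (α - 1) * (2 * α - 1) := by
    nlinarith [sq_nonneg (α - 1), sq_nonneg α]
  -- hence 2^(α-1) * q ≥ α
  have hkey2 : α ≤ (2:ℝ) ^ (α - 1) * q := by
    have hqe : q = (2 * α - 1) / α := by rw [hq]; field_simp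
    rw [hqe, ← mul_div_assoc, le_div_iff₀ hα0]
    nlinarith
  -- q^α ≥ 1
  have hqa : 1 ≤ q ^ α := one_le_rpow hq1 (le_of_lt hα0)
  have hbr : α - 1 ≤ (2:ℝ) ^ (α - 1) * q - 1 := by linarith
  have hbr0 : 0 ≤ (2:ℝ) ^ (α - 1) * q - 1 := by linarith
  have : (2:ℝ) ^ (α - 1) * q - 1 ≤ q ^ α * ((2:ℝ) ^ (α - 1) * q - 1) :=
    le_mul_of_one_le_left hbr0 hqa
  have : α - 1 ≤ q ^ α * ((2:ℝ) ^ (α - 1) * q - 1) := by linarith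
  rw [hβ]; nlinarith
end

section
/- For all real α > 1, q = 2 - 1/α, and β = q^α·2^(α-1): q^α·2^α - 2·q·β + α - 1 ≤ 0. -/
open Real

theorem stmt13 (α q β : ℝ) (hα : 1 < α)
    (hq : q = 2 - 1/α) (hβ : β = q ^ α * 2 ^ (α - 1)) :
    q ^ α * 2 ^ α - 2 * q * β + α - 1 ≤ 0 := by
  have hα0 : (0:ℝ) < α := by linarith
  have hia : 1/α < 1 := (div_lt_one hα0).mpr hα
  have hia0 : 0 < 1/α := by positivity
  have hq1 : 1 < q := by rw [hq]; linarith
  have hq0 : (0:ℝ) ≤ q := by linarith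
  have hA : q ^ α * 2 ^ α = (q * 2) ^ α := (mul_rpow hq0 (by norm_num)).symm
  have h1 : (2:ℝ) ^ α ≤ (q * 2) ^ α :=
    rpow_le_rpow (by norm_num) (by linarith) hα0.le
  have h2 : 1 + α * 1 ≤ (1 + 1:ℝ) ^ α :=
    one_add_mul_self_le_rpow_one_add (by norm_num) hα.le
  have hA' : α ≤ q ^ α * 2 ^ α := by
    rw [hA]; norm_num at h2; linarith
  have h2pow : (2:ℝ) ^ (α - 1) = 2 ^ α / 2 := by
    rw [rpow_sub (by norm_num), rpow_one]
  rw [hβ, h2pow]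
  have key : (α - 1) * (q ^ α * 2 ^ α - α) ≥ 0 :=
    mul_nonneg (by linarith) (by linarith)
  have hαq : α * (1 - q) = 1 - α := by
    rw [hq]; field_simp; ring
  nlinarith [key, hα0, hαq]
end

section
/- For all real α > 1, q = 2 - 1/α, β = q^α·2^(α-1), and all x ∈ [0,1]: q^α·(1+x)^α - β·q·(1+x) + α - 1 ≤ 0. -/
open Real

theorem stmt14 (α q β : ℝ) (hα : 1 < α)
    (hq : q = 2 - 1/α) (hβ : β = q ^ α * 2 ^ (α - 1)) :
    ∀ x : ℝ, 0 ≤ x → x ≤ 1 →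
      q ^ α * (1 + x) ^ α - β * q * (1 + x) + α - 1 ≤ 0 := by
  intro x hx0 hx1
  have hα0 : (0:ℝ) < α := by linarith
  have hq1 : 1 ≤ q := by
    rw [hq]
    have h1 : 1/α ≤ 1 := by
      rw [div_le_one hα0]; linarith
    linarith
  have hq0 : (0:ℝ) < q := by linarith
  set A := q ^ α with hA
  set T := (2:ℝ) ^ α with hT
  have hA1 : 1 ≤ A := Real.one_le_rpow hq1 hα0.le
  have hT1 : 1 + α ≤ T := by
    have h := one_add_mul_self_le_rpow_one_add (by norm_num : (-1:ℝ) ≤ 1) hα.le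
    have h2 : ((1:ℝ) + 1) = 2 := by norm_num
    rw [h2] at h
    rw [hT]; linarith
  have hT0 : (0:ℝ) < T := Real.rpow_pos_of_pos two_pos α
  have h2a1 : (2:ℝ)^(α-1) = T/2 := by
    rw [hT, Real.rpow_sub two_pos, Real.rpow_one]
  have hL : (0.6931471803:ℝ) ≤ Real.log 2 := Real.log_two_gt_d9.le
  have hqT : α ≤ q * (T/2) := by
    have hexp : 1 + (α-1) * Real.log 2 ≤ (2:ℝ)^(α-1) := by
      rw [Real.rpow_def_of_pos two_pos]
      calc 1 + (α-1) * Real.log 2 = Real.log 2 * (α-1) + 1 := by ring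
        _ ≤ Real.exp (Real.log 2 * (α-1)) := Real.add_one_le_exp _
    rw [← h2a1]
    have hq' : q * (1 + (α-1) * Real.log 2) ≤ q * (2:ℝ)^(α-1) := by
      have h0 : 0 ≤ 1 + (α-1) * Real.log 2 := by nlinarith
      exact mul_le_mul_of_nonneg_left hexp hq0.le
    have hid : q * (1 + (α-1) * Real.log 2) - α
        = ((2 * Real.log 2 - 1) * (α-1)^2 + Real.log 2 * (α-1)) / α := by
      rw [hq]; field_simp; ring
    have hnum : 0 ≤ (2 * Real.log 2 - 1) * (α-1)^2 + Real.log 2 * (α-1) := by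
      nlinarith [sq_nonneg (α-1)]
    have hd : 0 ≤ ((2 * Real.log 2 - 1) * (α-1)^2 + Real.log 2 * (α-1)) / α :=
      div_nonneg hnum hα0.le
    linarith
  -- endpoints
  have hf0 : A - A * (T/2) * q + α - 1 ≤ 0 := by nlinarith
  have hf1 : A * T - A * (T/2) * q * 2 + α - 1 ≤ 0 := by
    have hAT : α ≤ A * T := by nlinarith
    have key : A * T - A * (T/2) * q * 2 + α - 1 = ((α-1) * (α - A * T)) / α := by
      rw [hq]; field_simp; ring
    rw [key]
    apply div_nonpos_of_nonpos_of_nonneg _ hα0.le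
    exact mul_nonpos_of_nonneg_of_nonpos (by linarith) (by linarith)
  -- convexity
  have hconv : (1+x)^α ≤ (1-x) * 1 + x * T := by
    have hc := (convexOn_rpow hα.le).2 (Set.mem_Ici.2 (by norm_num : (0:ℝ) ≤ 1))
      (Set.mem_Ici.2 (by norm_num : (0:ℝ) ≤ 2)) (by linarith : 0 ≤ 1 - x) hx0
      (by ring : (1 - x) + x = 1)
    simp only [smul_eq_mul] at hc
    have he : (1-x) * 1 + x * 2 = 1 + x := by ring
    rw [he] at hc
    calc (1+x)^α ≤ (1-x) * (1:ℝ)^α + x * (2:ℝ)^α := hc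
      _ = (1-x) * 1 + x * T := by rw [Real.one_rpow]
  have hA0 : 0 ≤ A := by linarith
  have hmul : A * (1+x)^α ≤ A * ((1-x) * 1 + x * T) :=
    mul_le_mul_of_nonneg_left hconv hA0
  have hx1' : 0 ≤ 1 - x := by linarith
  have hc0 : (1-x) * (A - A * (T/2) * q + α - 1) ≤ 0 := mul_nonpos_of_nonneg_of_nonpos hx1' hf0
  have hc1 : x * (A * T - A * (T/2) * q * 2 + α - 1) ≤ 0 := mul_nonpos_of_nonneg_of_nonpos hx0 hf1
  have hβ' : β * q = A * (T/2) * q := by rw [hβ, h2a1, hA]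
  rw [hβ']
  nlinarith [hmul, hc0, hc1]
end

section
/- For every real α > 1, setting q = 2 - 1/α: for all reals g_0 > 0 and s_o ≥ 0, with β = c = q^α·2^(α-1), the inequality q^α·(g_0+s_o)^α - β·(q·α - (α-1))·g_0^α - β·α·(q-1)·g_0^(α-1)·s_o - c·s_o^α ≤ 0 holds. -/
open Real

lemma aux_pow2 {x y p : ℝ} (hx : 0 ≤ x) (hy : 0 ≤ y) (hp : 1 ≤ p) :
    (x + y) ^ p ≤ 2 ^ (p - 1) * (x ^ p + y ^ p) := by
  have h := NNReal.rpow_add_le_mul_rpow_add_rpow ⟨x, hx⟩ ⟨y, hy⟩ hp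
  have := NNReal.coe_le_coe.2 h
  push_cast at this
  convert this using 2 <;> rfl

theorem stmt17 (α q β c : ℝ) (hα : 1 < α)
    (hq : q = 2 - 1/α) (hβ : β = q ^ α * 2 ^ (α - 1)) (hc : c = q ^ α * 2 ^ (α - 1)) :
    ∀ g₀ s_o : ℝ, 0 < g₀ → 0 ≤ s_o →
      q ^ α * (g₀ + s_o) ^ α - β * (q * α - (α - 1)) * g₀ ^ α
        - β * α * (q - 1) * g₀ ^ (α - 1) * s_o - c * s_o ^ α ≤ 0 := by
  intro g s hg hs
  have hα0 : (0:ℝ) < α := by linarith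
  have hq1 : q * α - (α - 1) = α := by rw [hq]; field_simp; ring
  have hq2 : α * (q - 1) = α - 1 := by rw [hq]; field_simp; ring
  have hqpos : 0 < q := by rw [hq]; have : 1/α < 1 := by rw [div_lt_one hα0]; linarith
                           linarith
  have hqα : 0 < q ^ α := rpow_pos_of_pos hqpos α
  have h2 : (0:ℝ) < 2 ^ (α - 1) := rpow_pos_of_pos (by norm_num) _
  have hgα : 0 < g ^ α := rpow_pos_of_pos hg α
  have hgα1 : 0 ≤ g ^ (α - 1) := (rpow_pos_of_pos hg _).le
  have key : (g + s) ^ α ≤ 2 ^ (α - 1) * (g ^ α + s ^ α) :=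
    aux_pow2 hg.le hs hα.le
  have h1 : g ^ α + s ^ α ≤ α * g ^ α + (α - 1) * g ^ (α - 1) * s + s ^ α := by
    nlinarith [mul_nonneg (mul_nonneg (by linarith : (0:ℝ) ≤ α - 1) hgα1) hs]
  rw [hβ, hc]
  have key2 : (g + s) ^ α ≤ 2 ^ (α - 1) * (α * g ^ α + (α - 1) * g ^ (α - 1) * s + s ^ α) :=
    key.trans (by nlinarith)
  have main := mul_le_mul_of_nonneg_left key2 hqα.le
  calc q ^ α * (g + s) ^ α - q ^ α * 2 ^ (α - 1) * (q * α - (α - 1)) * g ^ α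
        - q ^ α * 2 ^ (α - 1) * α * (q - 1) * g ^ (α - 1) * s
        - q ^ α * 2 ^ (α - 1) * s ^ α
      = q ^ α * (g + s) ^ α - q ^ α * (2 ^ (α - 1) * (α * g ^ α + (α - 1) * g ^ (α - 1) * s + s ^ α)) := by
        rw [hq1]; rw [show q ^ α * 2 ^ (α - 1) * α * (q - 1) = q ^ α * 2 ^ (α - 1) * (α * (q - 1)) by ring, hq2]; ring
    _ ≤ 0 := by linarith [main]
end
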